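/- Let n ≥ 2 and let u : [0,∞) → ℝ be a solution of u''/(1+(u')²) − (n−1)/u + (1/2) r u' − (1/2) u = 0 with u(0) = a > 0 and u'(0) > 0, defined and C² on [0,∞), and suppose u stays positive wherever it is defined. Then u has no critical point on (0,∞), hence u'(r) > 0 for all r ≥ 0 and u is strictly increasing. -/

import Mathlib

/-- A positive solution of the self-expander ODE on `[0,∞)` with `u(0) = a > 0`
and `u'(0) > 0` has no critical point on `(0,∞)`; in fact `u' > 0` everywhere on
`[0,∞)` and `u` is strictly increasing. -/
theorem stmt_1 (n : ℕ) (hn : 2 ≤ n) (a : ℝ) (ha : 0 < a) (u : ℝ → ℝ)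
    (hreg : ContDiffOn ℝ 2 u (Set.Ici 0))
    (hode : ∀ r ∈ Set.Ici (0 : ℝ),
      deriv (deriv u) r / (1 + (deriv u r) ^ 2) - ((n : ℝ) - 1) / u r
        + (1 / 2) * r * deriv u r - (1 / 2) * u r = 0)
    (h0 : u 0 = a) (h0' : 0 < deriv u 0)
    (hupos : ∀ r ∈ Set.Ici (0 : ℝ), 0 < u r) :
    (∀ r > (0 : ℝ), deriv u r ≠ 0) ∧ (∀ r ∈ Set.Ici (0 : ℝ), 0 < deriv u r) ∧
      StrictMonoOn u (Set.Ici 0) := by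
  set g : ℝ → ℝ := deriv u with hg
  -- u is differentiable at 0 (else deriv u 0 = 0 contradicts h0')
  have hd0 : DifferentiableAt ℝ u 0 := by
    by_contra h
    have : deriv u 0 = 0 := deriv_zero_of_not_differentiableAt h
    rw [hg] at h0'
    rw [this] at h0'
    exact lt_irrefl 0 h0'
  -- derivWithin agrees with deriv on Ici 0
  have hdw : ∀ r ∈ Set.Ici (0 : ℝ), derivWithin u (Set.Ici 0) r = deriv u r := by
    intro r hr
    rcases eq_or_lt_of_le (Set.mem_Ici.mp hr) with h | h
    · subst h
      exact hd0.derivWithin (uniqueDiffOn_Ici 0 0 Set.self_mem_Ici)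
    · exact derivWithin_of_mem_nhds (Ici_mem_nhds h)
  -- g is continuous on Ici 0
  have hgcont : ContinuousOn g (Set.Ici 0) := by
    have := hreg.continuousOn_derivWithin (uniqueDiffOn_Ici 0) one_le_two
    exact this.congr (fun r hr => (hdw r hr).symm)
  -- deriv u is differentiable on Ioi 0
  have hgdiff : ∀ t : ℝ, 0 < t → HasDerivAt g (deriv g t) t := by
    intro t ht
    have h1 : ContDiffOn ℝ 1 (deriv u) (Set.Ioi 0) := by
      exact (hreg.mono (Set.Ioi_subset_Ici_self)).deriv_of_isOpen isOpen_Ioi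
        (by norm_num : (1:WithTop ℕ∞) + 1 ≤ 2)
    have h2 : ContDiffAt ℝ 1 g t :=
      h1.contDiffAt (isOpen_Ioi.mem_nhds ht)
    exact (h2.differentiableAt one_ne_zero).hasDerivAt
  -- At any zero of g on (0,∞), deriv g > 0
  have hkey : ∀ t : ℝ, 0 < t → g t = 0 → 0 < deriv g t := by
    intro t ht hzero
    have hode' := hode t (le_of_lt ht)
    rw [hzero] at hode'
    have hut : 0 < u t := hupos t (le_of_lt ht)
    have hn1 : (1:ℝ) ≤ (n:ℝ) - 1 := by
      have : (2:ℝ) ≤ (n:ℝ) := by exact_mod_cast hn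
      linarith
    have heq : deriv g t = ((n:ℝ) - 1) / u t + (1/2) * u t := by
      have h1 : (1:ℝ) + (0:ℝ)^2 = 1 := by norm_num
      field_simp at hode'
      field_simp
      linarith
    rw [heq]
    positivity
  -- g has no zero on (0,∞)
  have hnozero : ∀ t : ℝ, 0 < t → g t ≠ 0 := by
    intro r₀ hr₀ hz
    -- first zero
    set Z : Set ℝ := {r | r ∈ Set.Icc 0 r₀ ∧ g r = 0} with hZ
    have hZne : Z.Nonempty := ⟨r₀, ⟨le_of_lt hr₀, le_rfl⟩, hz⟩
    have hZcl : IsClosed Z := by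
      have : Z = Set.Icc 0 r₀ ∩ g ⁻¹' {0} := by
        ext x; simp [hZ, Set.mem_preimage]
      rw [this]
      exact (hgcont.mono (Set.Icc_subset_Ici_self)).preimage_isClosed_of_isClosed
        isClosed_Icc isClosed_singleton
    have hbdd : BddBelow Z := ⟨0, fun x hx => hx.1.1⟩
    set t := sInf Z with htdef
    have htZ : t ∈ Z := hZcl.csInf_mem hZne hbdd
    have ht0 : 0 ≤ t := htZ.1.1
    have htpos : 0 < t := by
      rcases eq_or_lt_of_le ht0 with h | h
      · exfalso; rw [← h] at htZ; exact h0'.ne' htZ.2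
      · exact h
    -- g > 0 on [0, t)
    have hpos : ∀ r, 0 ≤ r → r < t → 0 < g r := by
      intro r hr hrt
      rcases lt_trichotomy (g r) 0 with h | h | h
      · -- IVT gives a zero below t, contradiction
        exfalso
        have hcont : ContinuousOn g (Set.Icc 0 r) :=
          hgcont.mono (Set.Icc_subset_Ici_self)
        obtain ⟨c, hc1, hc2⟩ := intermediate_value_Icc' hr hcont
          ⟨le_of_lt h, le_of_lt h0'⟩
        have hcr : c < t := lt_of_le_of_lt hc1.2 hrt
        have hcZ : c ∈ Z := ⟨⟨hc1.1, hcr.le.trans htZ.1.2⟩, hc2⟩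
        exact absurd (csInf_le hbdd hcZ) (not_le.mpr hcr)
      · exfalso
        have hrZ : r ∈ Z := ⟨⟨hr, le_of_lt (lt_of_lt_of_le hrt htZ.1.2)⟩, h⟩
        exact absurd (csInf_le hbdd hrZ) (not_le.mpr hrt)
      · exact h
    -- derivative at t positive, but left slopes negative: contradiction
    have hc : 0 < deriv g t := hkey t htpos htZ.2
    have hder : HasDerivAt g (deriv g t) t := hgdiff t htpos
    have hslope := hasDerivAt_iff_tendsto_slope.mp hder
    have hslope' : Filter.Tendsto (slope g t) (nhdsWithin t (Set.Iio t)) (nhds (deriv g t)) :=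
      hslope.mono_left (nhdsWithin_mono t (fun x hx => ne_of_lt hx))
    have hev : ∀ᶠ r in nhdsWithin t (Set.Iio t), 0 < slope g t r :=
      hslope'.eventually (eventually_gt_nhds hc)
    have hmem : Set.Ioo 0 t ∈ nhdsWithin t (Set.Iio t) :=
      Ioo_mem_nhdsLT_of_mem ⟨htpos, le_rfl⟩
    have : ∀ᶠ r in nhdsWithin t (Set.Iio t), False := by
      filter_upwards [hev, hmem] with r h1 h2
      have hgr : 0 < g r := hpos r (le_of_lt h2.1) h2.2
      have : slope g t r = (g r - g t) / (r - t) := by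
        rw [slope_def_field]
      rw [this, htZ.2] at h1
      have hneg : (g r - 0) / (r - t) < 0 :=
        div_neg_of_pos_of_neg (by linarith) (by linarith [h2.2])
      linarith
    exact (this.exists).elim (fun _ h => h)
  -- positivity of g on Ici 0
  have hgpos : ∀ r ∈ Set.Ici (0:ℝ), 0 < g r := by
    intro r hr
    rcases eq_or_lt_of_le (Set.mem_Ici.mp hr) with h | h
    · rw [← h]; exact h0'
    · rcases lt_trichotomy (g r) 0 with hneg | hzero | hpos
      · exfalso
        have hcont : ContinuousOn g (Set.Icc 0 r) :=
          hgcont.mono (Set.Icc_subset_Ici_self)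
        have h00 : (0:ℝ) ∈ Set.Icc (g r) (g 0) := ⟨le_of_lt hneg, le_of_lt h0'⟩
        obtain ⟨c, hc1, hc2⟩ := intermediate_value_Icc' (le_of_lt h) hcont h00
        rcases eq_or_lt_of_le hc1.1 with hc0 | hc0
        · rw [← hc0] at hc2; exact h0'.ne' hc2
        · exact hnozero c hc0 hc2
      · exact absurd hzero (hnozero r h)
      · exact hpos
  refine ⟨fun r hr => hnozero r hr, hgpos, ?_⟩
  exact strictMonoOn_of_deriv_pos (convex_Ici 0) hreg.continuousOn
    (fun x hx => hgpos x (Set.mem_of_mem_of_subset hx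
      (by rw [interior_Ici]; exact Set.Ioi_subset_Ici_self)))
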